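/- Let X ∼ Gumbel(0, τ) and κ a positive integer. Then X is equal in distribution to the sum of κ i.i.d. random variables each distributed as the Sum-of-Gamma distribution SoG(κ, τ), defined as the limit as s → ∞ of (τ/κ)[Σ_{i=1}^s Gamma(1/κ, κ/i) − log s], where the Gamma summands are independent. -/

import Mathlib

open MeasureTheory ProbabilityTheory Real Filter

section SoGHelpers
open Set
open scoped ENNReal
open MeasureTheory ProbabilityTheory Real Filter Set
open scoped ENNReal

@[fun_prop]
lemma measurable_gammaPDF (a r : ℝ) : Measurable (gammaPDF a r) :=
  (measurable_gammaPDFReal a r).ennreal_ofReal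

lemma scale_step {a b u : ℝ} (hu : 0 < u) :
    ∫⁻ x in Ioo 0 u, ENNReal.ofReal (x ^ (a-1) * (u-x) ^ (b-1)) =
      ENNReal.ofReal (u ^ (a+b-1)) *
        ∫⁻ v in Ioo (0:ℝ) 1, ENNReal.ofReal (v ^ (a-1) * (1-v) ^ (b-1)) := by
  have hmeas : Measurable fun x : ℝ => (Ioo (0:ℝ) u).indicator
      (fun x => ENNReal.ofReal (x ^ (a-1) * (u-x) ^ (b-1))) x :=
    (Measurable.ennreal_ofReal (by fun_prop)).indicator measurableSet_Ioo
  have hvol : (volume : Measure ℝ) =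
      ENNReal.ofReal |u| • Measure.map (fun x => u * x) volume :=
    (Real.smul_map_volume_mul_left hu.ne').symm
  rw [← lintegral_indicator measurableSet_Ioo]
  conv_lhs => rw [hvol]
  rw [lintegral_smul_measure, lintegral_map hmeas (measurable_const_mul u)]
  have hpt : ∀ v : ℝ, (Ioo (0:ℝ) u).indicator
      (fun x => ENNReal.ofReal (x ^ (a-1) * (u-x) ^ (b-1))) (u * v)
      = (Ioo (0:ℝ) 1).indicator
        (fun v => ENNReal.ofReal (u ^ (a-1) * u ^ (b-1)) *
          ENNReal.ofReal (v ^ (a-1) * (1-v) ^ (b-1))) v := by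
    intro v
    by_cases hv : v ∈ Ioo (0:ℝ) 1
    · have huv : u * v ∈ Ioo 0 u := by
        constructor
        · exact mul_pos hu hv.1
        · nlinarith [hv.2, hu]
      rw [indicator_of_mem huv, indicator_of_mem hv]
      rw [← ENNReal.ofReal_mul (by positivity)]
      congr 1
      have h1 : (u * v) ^ (a-1) = u ^ (a-1) * v ^ (a-1) :=
        Real.mul_rpow hu.le hv.1.le
      have h2 : (u - u * v) ^ (b-1) = u ^ (b-1) * (1-v) ^ (b-1) := by
        rw [show u - u * v = u * (1 - v) by ring]
        exact Real.mul_rpow hu.le (by linarith [hv.2])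
      rw [h1, h2]; ring
    · have huv : u * v ∉ Ioo 0 u := by
        simp only [mem_Ioo, not_and_or, not_lt] at hv ⊢
        rcases hv with hv | hv
        · left; exact mul_nonpos_of_nonneg_of_nonpos hu.le hv
        · right; nlinarith
      rw [indicator_of_notMem huv, indicator_of_notMem hv]
  simp_rw [hpt]
  rw [lintegral_indicator measurableSet_Ioo, lintegral_const_mul _ (by fun_prop)]
  rw [abs_of_pos hu, smul_eq_mul, ← mul_assoc, ← ENNReal.ofReal_mul hu.le]
  congr 2
  rw [show a+b-1 = 1+(a-1)+(b-1) by ring, Real.rpow_add hu, Real.rpow_add hu,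
    Real.rpow_one]
  ring

noncomputable def betaC (a b : ℝ) : ℝ≥0∞ :=
  (∫⁻ v in Ioo (0:ℝ) 1, ENNReal.ofReal (v ^ (a-1) * (1-v) ^ (b-1))) *
    ENNReal.ofReal (Real.Gamma (a+b) / (Real.Gamma a * Real.Gamma b))

lemma key_inner {a b r : ℝ} (ha : 0 < a) (hb : 0 < b) (hr : 0 < r) {u : ℝ}
    (hu : u ≠ 0) :
    ∫⁻ x, gammaPDF a r x * gammaPDF b r (u - x) =
      betaC a b * gammaPDF (a+b) r u := by
  rcases lt_or_gt_of_ne hu with hu' | hu'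
  · rw [gammaPDF_of_neg hu', mul_zero]
    rw [← lintegral_zero]
    refine lintegral_congr fun x => ?_
    rcases lt_or_ge x 0 with hx | hx
    · rw [gammaPDF_of_neg hx, zero_mul]
    · rw [gammaPDF_of_neg (show u - x < 0 by linarith), mul_zero]
  · -- u > 0
    have hΓa := Real.Gamma_pos_of_pos ha
    have hΓb := Real.Gamma_pos_of_pos hb
    have hΓab := Real.Gamma_pos_of_pos (by linarith : (0:ℝ) < a + b)
    set C : ℝ := r ^ a / Real.Gamma a * (r ^ b / Real.Gamma b) * Real.exp (-(r*u)) with hC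
    have hCnn : 0 ≤ C := by positivity
    have h1 : (∫⁻ x, gammaPDF a r x * gammaPDF b r (u - x))
        = ∫⁻ x in Icc (0:ℝ) u, gammaPDF a r x * gammaPDF b r (u - x) := by
      rw [← lintegral_indicator measurableSet_Icc]
      refine lintegral_congr fun x => ?_
      by_cases hx : x ∈ Icc (0:ℝ) u
      · rw [indicator_of_mem hx]
      · rw [indicator_of_notMem hx]
        simp only [mem_Icc, not_and_or, not_le] at hx
        rcases hx with hx | hx
        · rw [gammaPDF_of_neg hx, zero_mul]
        · rw [gammaPDF_of_neg (show u - x < 0 by linarith), mul_zero]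
    have h2 : (∫⁻ x in Icc (0:ℝ) u, gammaPDF a r x * gammaPDF b r (u - x))
        = ∫⁻ x in Ioo (0:ℝ) u, gammaPDF a r x * gammaPDF b r (u - x) :=
      (setLIntegral_congr (Ioo_ae_eq_Icc (α := ℝ))).symm
    have h3 : (∫⁻ x in Ioo (0:ℝ) u, gammaPDF a r x * gammaPDF b r (u - x))
        = ∫⁻ x in Ioo (0:ℝ) u,
            ENNReal.ofReal C * ENNReal.ofReal (x ^ (a-1) * (u-x) ^ (b-1)) := by
      refine setLIntegral_congr_fun measurableSet_Ioo (fun x hx => ?_)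
      rw [gammaPDF_of_nonneg hx.1.le, gammaPDF_of_nonneg (by linarith [hx.2] : (0:ℝ) ≤ u - x),
        ← ENNReal.ofReal_mul (mul_nonneg (mul_nonneg (by positivity)
          (Real.rpow_nonneg hx.1.le _)) (Real.exp_nonneg _)),
        ← ENNReal.ofReal_mul hCnn]
      congr 1
      have hee : Real.exp (-(r*u)) = Real.exp (-(r*x)) * Real.exp (-(r*(u-x))) := by
        rw [← Real.exp_add]; congr 1; ring
      rw [hC, hee]; ring
    rw [h1, h2, h3, lintegral_const_mul _ (by fun_prop), scale_step hu',
      gammaPDF_of_nonneg hu'.le]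
    unfold betaC
    set B := ∫⁻ v in Ioo (0:ℝ) 1, ENNReal.ofReal (v ^ (a-1) * (1-v) ^ (b-1)) with hBdef
    rw [← mul_assoc, ← ENNReal.ofReal_mul hCnn, mul_assoc B,
      ← ENNReal.ofReal_mul (by positivity), mul_comm B]
    congr 1
    rw [hC, Real.rpow_add hr]
    field_simp


lemma gamma_conv_apply {a b r : ℝ} (ha : 0 < a) (hb : 0 < b) (hr : 0 < r)
    {S : Set ℝ} (hS : MeasurableSet S) :
    ((gammaMeasure a r).prod (gammaMeasure b r)).map (fun p : ℝ × ℝ => p.1 + p.2) S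
      = betaC a b * gammaMeasure (a+b) r S := by
  have : IsProbabilityMeasure (gammaMeasure b r) := isProbabilityMeasure_gammaMeasure hb hr
  rw [Measure.map_apply measurable_add hS,
    Measure.prod_apply (measurable_add hS)]
  have hslice : ∀ x : ℝ, (Prod.mk x ⁻¹' ((fun p : ℝ × ℝ => p.1 + p.2) ⁻¹' S))
      = (fun y => x + y) ⁻¹' S := by intro x; rfl
  simp_rw [hslice]
  have hν : ∀ x : ℝ, gammaMeasure b r ((fun y => x + y) ⁻¹' S)
      = ∫⁻ y, S.indicator (fun _ => (1:ℝ≥0∞)) (x + y) * gammaPDF b r y := by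
    intro x
    rw [gammaMeasure, withDensity_apply _ ((measurable_const_add x) hS),
      ← lintegral_indicator ((measurable_const_add x) hS)]
    refine lintegral_congr fun y => ?_
    by_cases hy : x + y ∈ S
    · simp [indicator_of_mem, hy, indicator_of_mem (show y ∈ (fun y => x+y) ⁻¹' S from hy)]
    · simp [indicator_of_notMem hy, indicator_of_notMem (show y ∉ (fun y => x+y) ⁻¹' S from hy)]
  simp_rw [hν]
  have htrans : ∀ x : ℝ, (∫⁻ y, S.indicator (fun _ => (1:ℝ≥0∞)) (x + y) * gammaPDF b r y)
      = ∫⁻ z, S.indicator (fun _ => (1:ℝ≥0∞)) z * gammaPDF b r (z - x) := by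
    intro x
    rw [← lintegral_add_left_eq_self
      (fun z => S.indicator (fun _ => (1:ℝ≥0∞)) z * gammaPDF b r (z - x)) x]
    simp
  simp_rw [htrans]
  have hFj : Measurable (Function.uncurry fun x z =>
      S.indicator (fun _ => (1:ℝ≥0∞)) z * gammaPDF b r (z - x)) :=
    (((measurable_const.indicator hS).comp measurable_snd).mul
      ((measurable_gammaPDF b r).comp (measurable_snd.sub measurable_fst)))
  rw [gammaMeasure, lintegral_withDensity_eq_lintegral_mul _ (measurable_gammaPDF a r)
    hFj.lintegral_prod_right]
  have hswap : (∫⁻ x, ((gammaPDF a r) * fun x =>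
        ∫⁻ z, S.indicator (fun _ => (1:ℝ≥0∞)) z * gammaPDF b r (z - x)) x)
      = ∫⁻ x, ∫⁻ z, gammaPDF a r x *
          (S.indicator (fun _ => (1:ℝ≥0∞)) z * gammaPDF b r (z - x)) := by
    refine lintegral_congr fun x => ?_
    simp only [Pi.mul_apply]
    rw [lintegral_const_mul _ (by fun_prop (disch := exact hS))]
  rw [hswap, lintegral_lintegral_swap (by fun_prop (disch := exact hS))]
  have hre : ∀ z : ℝ, (∫⁻ x, gammaPDF a r x *
        (S.indicator (fun _ => (1:ℝ≥0∞)) z * gammaPDF b r (z - x)))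
      = S.indicator (fun _ => (1:ℝ≥0∞)) z * ∫⁻ x, gammaPDF a r x * gammaPDF b r (z - x) := by
    intro z
    rw [← lintegral_const_mul _ (by fun_prop)]
    exact lintegral_congr fun x => by ring
  simp_rw [hre]
  have hae : ∀ᵐ z : ℝ, S.indicator (fun _ => (1:ℝ≥0∞)) z *
        (∫⁻ x, gammaPDF a r x * gammaPDF b r (z - x))
      = S.indicator (fun _ => (1:ℝ≥0∞)) z * (betaC a b * gammaPDF (a+b) r z) := by
    filter_upwards [compl_mem_ae_iff.mpr (volume_singleton (a := (0:ℝ)))] with z hz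
    rw [key_inner ha hb hr hz]
  rw [lintegral_congr_ae hae]
  have hre2 : ∀ z : ℝ, S.indicator (fun _ => (1:ℝ≥0∞)) z * (betaC a b * gammaPDF (a+b) r z)
      = betaC a b * S.indicator (gammaPDF (a+b) r) z := by
    intro z
    by_cases hz : z ∈ S
    · simp [indicator_of_mem hz]
    · simp [indicator_of_notMem hz]
  simp_rw [hre2]
  rw [lintegral_const_mul _ ((measurable_gammaPDF _ r).indicator hS),
    lintegral_indicator hS, gammaMeasure, withDensity_apply _ hS]


lemma gamma_conv {a b r : ℝ} (ha : 0 < a) (hb : 0 < b) (hr : 0 < r) :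
    ((gammaMeasure a r).prod (gammaMeasure b r)).map (fun p : ℝ × ℝ => p.1 + p.2)
      = gammaMeasure (a+b) r := by
  have h1 : IsProbabilityMeasure (gammaMeasure a r) := isProbabilityMeasure_gammaMeasure ha hr
  have h2 : IsProbabilityMeasure (gammaMeasure b r) := isProbabilityMeasure_gammaMeasure hb hr
  have h3 : IsProbabilityMeasure (gammaMeasure (a+b) r) :=
    isProbabilityMeasure_gammaMeasure (by linarith) hr
  have hc : betaC a b = 1 := by
    have h := gamma_conv_apply ha hb hr (S := Set.univ) MeasurableSet.univ
    rw [Measure.map_apply measurable_add MeasurableSet.univ] at h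
    simp only [Set.preimage_univ, measure_univ] at h
    rw [mul_one] at h
    exact h.symm
  ext S hS
  rw [gamma_conv_apply ha hb hr hS, hc, one_mul]

variable {Ω : Type*} [MeasurableSpace Ω] {P : Measure Ω}

lemma my_precomp {ι ι' : Type*} [Nonempty ι'] {β : Type*} [m : MeasurableSpace β]
    {f : ι → Ω → β} (h : iIndepFun f P) {g : ι' → ι}
    (hg : Function.Injective g) :
    iIndepFun (fun i => f (g i)) P := by
  rw [iIndepFun_iff_measure_inter_preimage_eq_mul] at h ⊢
  intro S sets hsets
  classical
  have key := h (S.map ⟨g, hg⟩) (sets := fun i => sets (Function.invFun g i)) ?_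
  · have h1 : (⋂ i ∈ S.map ⟨g, hg⟩, f i ⁻¹' sets (Function.invFun g i))
        = ⋂ i ∈ S, f (g i) ⁻¹' sets i := by
      ext ω
      simp only [Set.mem_iInter, Finset.mem_map, Function.Embedding.coeFn_mk]
      constructor
      · intro H i hi
        have := H (g i) ⟨i, hi, rfl⟩
        rwa [Function.leftInverse_invFun hg i] at this
      · rintro H i ⟨j, hj, rfl⟩
        rw [Function.leftInverse_invFun hg j]
        exact H j hj
    rw [h1] at key
    rw [key, Finset.prod_map]
    refine Finset.prod_congr rfl fun i _ => ?_
    simp [Function.leftInverse_invFun hg i]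
  · rintro i hi
    simp only [Finset.mem_map, Function.Embedding.coeFn_mk] at hi
    obtain ⟨j, hj, rfl⟩ := hi
    simp only [Function.leftInverse_invFun hg j]
    exact hsets j hj

lemma my_blocks {ι : Type*} {f : ι → Ω → ℝ}
    (h : iIndepFun f P)
    (hf : ∀ i, Measurable (f i)) {S T : Finset ι} (hST : Disjoint S T) :
    IndepFun (fun ω => ∑ i ∈ S, f i ω) (fun ω => ∑ i ∈ T, f i ω) P := by
  classical
  have := (h.indepFun_finset S T hST hf).comp
    (φ := fun v : S → ℝ => ∑ i : S, v i) (ψ := fun v : T → ℝ => ∑ i : T, v i)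
    (Finset.measurable_sum _ fun i _ => measurable_pi_apply i)
    (Finset.measurable_sum _ fun i _ => measurable_pi_apply i)
  convert this using 1 <;> ext ω <;> simp [Function.comp, Finset.sum_attach]
  · exact (Finset.sum_attach S fun i => f i ω).symm
  · exact (Finset.sum_attach T fun i => f i ω).symm

lemma my_map_add [IsProbabilityMeasure P] {X Y : Ω → ℝ} (h : IndepFun X Y P)
    (hX : Measurable X) (hY : Measurable Y) :
    P.map (fun ω => X ω + Y ω) =
      ((P.map X).prod (P.map Y)).map (fun p : ℝ × ℝ => p.1 + p.2) := by
  have hpair : P.map (fun ω => (X ω, Y ω)) = (P.map X).prod (P.map Y) :=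
    (indepFun_iff_map_prod_eq_prod_map_map hX.aemeasurable hY.aemeasurable).mp h
  rw [← hpair, Measure.map_map measurable_add (hX.prodMk hY)]
  rfl


lemma map_sum_gamma {ι : Type*} [IsProbabilityMeasure P] {f : ι → Ω → ℝ}
    (h : iIndepFun f P) (hf : ∀ i, Measurable (f i))
    {a r : ℝ} (ha : 0 < a) (hr : 0 < r)
    (hlaw : ∀ i, P.map (f i) = gammaMeasure a r) (t : Finset ι) (ht : t.Nonempty) :
    P.map (fun ω => ∑ i ∈ t, f i ω) = gammaMeasure (t.card * a) r := by
  classical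
  induction ht using Finset.Nonempty.cons_induction with
  | singleton j => simpa using hlaw j
  | cons j t hj ht ih =>
    have hsum : (fun ω => ∑ i ∈ Finset.cons j t hj, f i ω)
        = fun ω => f j ω + ∑ i ∈ t, f i ω := by
      funext ω; rw [Finset.sum_cons]
    have hindep : IndepFun (f j) (fun ω => ∑ i ∈ t, f i ω) P := by
      have := (h.indepFun_finset_sum_of_notMem hf hj).symm
      convert this using 2
      rw [Finset.sum_apply]
    rw [hsum, my_map_add hindep (hf j) (t.measurable_sum fun i _ => hf i), hlaw j, ih,
      gamma_conv ha (by positivity) hr]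
    congr 1
    rw [Finset.card_cons]
    push_cast
    ring
open MeasureTheory ProbabilityTheory Real Filter Set
open scoped ENNReal


-- FTC computation
lemma hypo_integral {lam : ℝ} (hlam : 0 < lam) (s : ℕ) {u : ℝ} (hu : 0 ≤ u) :
    ∫ y in (0:ℝ)..u, ((s:ℝ)+1)*lam * Real.exp (-(((s:ℝ)+1)*lam*y)) *
        (1 - Real.exp (-(lam*(u-y))))^s
      = (1 - Real.exp (-(lam*u)))^(s+1) := by
  set r : ℝ := ((s:ℝ)+1)*lam with hrdef
  have hderiv : ∀ y ∈ uIcc (0:ℝ) u,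
      HasDerivAt (fun y => -(Real.exp (-(r*y)) * (1 - Real.exp (-(lam*(u-y))))^(s+1)))
        (r * Real.exp (-(r*y)) * (1 - Real.exp (-(lam*(u-y))))^s) y := by
    intro y _
    have h1 : HasDerivAt (fun y : ℝ => -(r*y)) (-r) y := by
      simpa using ((hasDerivAt_id y).const_mul r).fun_neg
    have h2 : HasDerivAt (fun y : ℝ => Real.exp (-(r*y)))
        (Real.exp (-(r*y)) * (-r)) y := h1.exp
    have h3 : HasDerivAt (fun y : ℝ => -(lam*(u-y))) lam y := by
      simpa using (((hasDerivAt_const y u).fun_sub (hasDerivAt_id y)).const_mul lam).fun_neg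
    have h4 : HasDerivAt (fun y : ℝ => 1 - Real.exp (-(lam*(u-y))))
        (-(Real.exp (-(lam*(u-y))) * lam)) y := by
      simpa using (hasDerivAt_const y (1:ℝ)).fun_sub h3.exp
    have h5 := h4.fun_pow (s+1)
    have h6 := (h2.fun_mul h5).fun_neg
    refine h6.congr_deriv ?_
    simp only [hrdef]
    push_cast
    rw [pow_succ]
    ring
  have hcont : Continuous fun y => r * Real.exp (-(r*y)) * (1 - Real.exp (-(lam*(u-y))))^s := by
    fun_prop
  have := intervalIntegral.integral_eq_sub_of_hasDerivAt hderiv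
    (hcont.intervalIntegrable 0 u)
  rw [this]
  simp only [mul_zero, sub_zero, Real.exp_zero, mul_one]
  rw [show u - u = 0 by ring]
  simp [Real.exp_zero]

lemma F_meas {lam : ℝ} (s : ℕ) : Measurable (fun t : ℝ =>
    if 0 ≤ t then ENNReal.ofReal ((1 - Real.exp (-(lam*t)))^s) else (0:ℝ≥0∞)) := by
  refine Measurable.ite measurableSet_Ici (by fun_prop) measurable_const

lemma hypoexp_cdf {Ω : Type*} [MeasurableSpace Ω] {P : Measure Ω} [IsProbabilityMeasure P]
    {lam : ℝ} (hlam : 0 < lam) {X : ℕ → Ω → ℝ} (hX : ∀ i, Measurable (X i))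
    (hind : ∀ s, IndepFun (X s) (fun ω => ∑ i ∈ Finset.range s, X i ω) P)
    (hlaw : ∀ i, P.map (X i) = gammaMeasure 1 (((i:ℝ)+1) * lam)) :
    ∀ s u, P {ω | ∑ i ∈ Finset.range s, X i ω ≤ u}
      = if 0 ≤ u then ENNReal.ofReal ((1 - Real.exp (-(lam*u)))^s) else 0 := by
  have hgm : Measurable (gammaPDF 1 (((0:ℝ)+1) * lam)) := by
    exact (measurable_gammaPDFReal _ _).ennreal_ofReal
  intro s
  induction s with
  | zero =>
    intro u
    simp only [Finset.sum_range_zero, pow_zero, ENNReal.ofReal_one]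
    by_cases hu : 0 ≤ u
    · rw [if_pos hu]
      have : {ω : Ω | (0:ℝ) ≤ u} = Set.univ := by ext ω; simp [hu]
      rw [this, measure_univ]
    · rw [if_neg hu]
      have : {ω : Ω | (0:ℝ) ≤ u} = ∅ := by ext ω; simp [hu]
      rw [this, measure_empty]
  | succ s ih =>
    intro u
    set rr : ℝ := ((s:ℝ)+1) * lam with hrr
    have hrrpos : 0 < rr := by positivity
    set Ssum : Ω → ℝ := fun ω => ∑ i ∈ Finset.range s, X i ω with hSsum
    have hSmeas : Measurable Ssum := Finset.measurable_sum _ fun i _ => hX i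
    set F : ℝ → ℝ≥0∞ := fun t =>
      if 0 ≤ t then ENNReal.ofReal ((1 - Real.exp (-(lam*t)))^s) else 0 with hF
    have hFmeas : Measurable F := F_meas s
    have hset : MeasurableSet {p : ℝ × ℝ | p.2 + p.1 ≤ u} :=
      (measurable_snd.add measurable_fst) measurableSet_Iic
    have hev : {ω | ∑ i ∈ Finset.range (s+1), X i ω ≤ u}
        = (fun ω => (X s ω, Ssum ω)) ⁻¹' {p : ℝ × ℝ | p.2 + p.1 ≤ u} := by
      ext ω
      simp only [Set.mem_setOf_eq, Set.mem_preimage, Finset.sum_range_succ]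
      rfl
    rw [hev, ← Measure.map_apply ((hX s).prodMk hSmeas) hset,
      (indepFun_iff_map_prod_eq_prod_map_map (hX s).aemeasurable hSmeas.aemeasurable).mp
        (hind s),
      Measure.prod_apply hset]
    have hslice : ∀ y : ℝ, (Prod.mk y ⁻¹' {p : ℝ × ℝ | p.2 + p.1 ≤ u}) = Set.Iic (u - y) := by
      intro y; ext z; simp only [Set.mem_preimage, Set.mem_setOf_eq, Set.mem_Iic]
      constructor <;> intro h <;> linarith
    have hmapS : ∀ y : ℝ, (P.map Ssum) (Set.Iic (u - y)) = F (u - y) := by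
      intro y
      rw [Measure.map_apply hSmeas measurableSet_Iic]
      exact ih (u - y)
    simp_rw [hslice, hmapS, hlaw s]
    rw [gammaMeasure, lintegral_withDensity_eq_lintegral_mul _
      (measurable_gammaPDF 1 (((s:ℝ)+1) * lam))
      (hFmeas.comp' (measurable_const.fun_sub measurable_id'))]
    by_cases hu : 0 ≤ u
    · rw [if_pos hu]
      have hptw : (fun y => (gammaPDF 1 (((s:ℝ)+1) * lam) * fun y => F (u - y)) y)
          = fun y => (Set.Icc (0:ℝ) u).indicator
            (fun y => ENNReal.ofReal (rr * Real.exp (-(rr*y)) * (1 - Real.exp (-(lam*(u-y))))^s)) y := by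
        funext y
        simp only [Pi.mul_apply]
        by_cases hy : y ∈ Set.Icc (0:ℝ) u
        · rw [Set.indicator_of_mem hy]
          rw [gammaPDF_of_nonneg hy.1]
          simp only [hF]
          rw [if_pos (by linarith [hy.2] : (0:ℝ) ≤ u - y)]
          rw [← ENNReal.ofReal_mul (mul_nonneg (mul_nonneg (by positivity)
            (Real.rpow_nonneg hy.1 _)) (Real.exp_nonneg _))]
          congr 1
          rw [Real.rpow_one, sub_self, Real.rpow_zero, Real.Gamma_one, hrr]
          ring
        · rw [Set.indicator_of_notMem hy]
          simp only [Set.mem_Icc, not_and_or, not_le] at hy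
          rcases hy with hy | hy
          · rw [gammaPDF_of_neg hy, zero_mul]
          · simp only [hF]
            rw [if_neg (by simp only [not_le]; linarith : ¬ (0:ℝ) ≤ u - y), mul_zero]
      rw [hptw, lintegral_indicator measurableSet_Icc]
      have hcont : Continuous fun y =>
          rr * Real.exp (-(rr*y)) * (1 - Real.exp (-(lam*(u-y))))^s := by fun_prop
      have hint : IntegrableOn (fun y =>
          rr * Real.exp (-(rr*y)) * (1 - Real.exp (-(lam*(u-y))))^s) (Set.Icc 0 u) :=
        hcont.integrableOn_Icc
      have hnn : 0 ≤ᵐ[volume.restrict (Set.Icc (0:ℝ) u)] fun y =>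
          rr * Real.exp (-(rr*y)) * (1 - Real.exp (-(lam*(u-y))))^s := by
        filter_upwards [ae_restrict_mem measurableSet_Icc] with y hy
        have h1 : Real.exp (-(lam*(u-y))) ≤ 1 := by
          rw [Real.exp_le_one_iff]
          nlinarith [hy.1, hy.2, hlam]
        have h2 : (0:ℝ) ≤ 1 - Real.exp (-(lam*(u-y))) := by linarith
        positivity
      rw [← ofReal_integral_eq_lintegral_ofReal hint hnn,
        MeasureTheory.integral_Icc_eq_integral_Ioc,
        ← intervalIntegral.integral_of_le hu, hypo_integral hlam s hu]
    · rw [if_neg hu]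
      rw [← lintegral_zero]
      refine lintegral_congr fun y => ?_
      simp only [Pi.mul_apply]
      rcases lt_or_ge y 0 with hy | hy
      · rw [gammaPDF_of_neg hy, zero_mul]
      · simp only [Pi.mul_apply, hF]
        rw [if_neg (by simp only [not_le] at hu ⊢; linarith : ¬ (0:ℝ) ≤ u - y), mul_zero]
end SoGHelpers

/-- CDF of the Gumbel(0, τ) distribution. -/
noncomputable def gumbelCDF (τ x : ℝ) : ℝ := Real.exp (-Real.exp (-(x / τ)))

/-- A Gumbel(0,τ) r.v. equals in distribution the sum of `κ` i.i.d. Sum-of-Gamma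
variables `SoG(κ,τ) = lim_{s→∞} (τ/κ)[Σ_{i=1}^s Gamma(1/κ, κ/i) − log s]`: the CDF of
the sum of the truncated Sum-of-Gamma variables converges pointwise to the Gumbel CDF. -/
theorem gumbel_eq_sum_of_gamma {Ω : Type*} [MeasurableSpace Ω] (P : Measure Ω)
    [IsProbabilityMeasure P] (τ : ℝ) (hτ : 0 < τ) (κ : ℕ) (hκ : 0 < κ)
    (G : ℕ → Fin κ → Ω → ℝ) (hmeas : ∀ i j, Measurable (G i j))
    (hindep : iIndepFun
      (fun p : ℕ × Fin κ => G p.1 p.2) P)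
    (hlaw : ∀ i j, Measure.map (G i j) P
      = gammaMeasure (1 / (κ : ℝ)) (((i : ℝ) + 1) / κ)) (x : ℝ) :
    Tendsto (fun s : ℕ =>
        P {ω | ∑ j : Fin κ,
            (τ / κ) * ((∑ i ∈ Finset.range s, G i j ω) - Real.log s) ≤ x})
      atTop (nhds (ENNReal.ofReal (gumbelCDF τ x))) := by
  classical
  have : Nonempty (Fin κ) := ⟨⟨0, hκ⟩⟩
  have hκR : (0:ℝ) < κ := by exact_mod_cast hκ
  set lam : ℝ := 1 / κ with hlam_def
  have hlam : 0 < lam := by positivity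
  set X : ℕ → Ω → ℝ := fun i ω => ∑ j : Fin κ, G i j ω with hX_def
  have hXmeas : ∀ i, Measurable (X i) :=
    fun i => Finset.measurable_sum _ fun j _ => hmeas i j
  have hXlaw : ∀ i, P.map (X i) = gammaMeasure 1 (((i:ℝ)+1) * lam) := by
    intro i
    have hiid : iIndepFun (fun j : Fin κ => G i j) P :=
      my_precomp hindep (g := fun j : Fin κ => ((i, j) : ℕ × Fin κ))
        (fun j j' h => by simpa using congrArg Prod.snd h)
    have hmap := map_sum_gamma hiid (fun j => hmeas i j) (a := 1/(κ:ℝ)) (by positivity)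
      (r := ((i:ℝ)+1)/κ) (by positivity) (fun j => hlaw i j) Finset.univ
      ⟨⟨0, hκ⟩, Finset.mem_univ _⟩
    have hX_eq : X i = fun ω => ∑ j ∈ Finset.univ, G i j ω := rfl
    rw [hX_eq, hmap]
    congr 1
    · rw [Finset.card_univ, Fintype.card_fin]
      field_simp
    · rw [hlam_def, mul_one_div]
  have hind2 : ∀ s, IndepFun (X s) (fun ω => ∑ i ∈ Finset.range s, X i ω) P := by
    intro s
    have hdisj : Disjoint (({s} : Finset ℕ) ×ˢ (Finset.univ : Finset (Fin κ)))
        ((Finset.range s) ×ˢ (Finset.univ : Finset (Fin κ))) := by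
      rw [Finset.disjoint_left]
      rintro ⟨i, j⟩ h1 h2
      simp only [Finset.mem_product, Finset.mem_singleton, Finset.mem_range] at h1 h2
      omega
    have hblk := my_blocks hindep (fun p => hmeas p.1 p.2) hdisj
    convert hblk using 1
    · funext ω
      rw [Finset.sum_product, Finset.sum_singleton]
    · funext ω
      rw [Finset.sum_product]
  have hcdf := hypoexp_cdf hlam hXmeas hind2 hXlaw
  set c : ℝ := Real.exp (-(x/τ)) with hc_def
  have hc : 0 < c := Real.exp_pos _
  have hgum : gumbelCDF τ x = Real.exp (-c) := rfl
  have hlim : Tendsto (fun s : ℕ => ENNReal.ofReal ((1 + (-c)/(s:ℝ))^s))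
      atTop (nhds (ENNReal.ofReal (gumbelCDF τ x))) := by
    rw [hgum]
    exact (ENNReal.continuous_ofReal.tendsto _).comp (Real.tendsto_one_add_div_pow_exp (-c))
  refine Tendsto.congr' ?_ hlim
  filter_upwards [tendsto_natCast_atTop_atTop.eventually_gt_atTop c] with s hs
  have hs0 : (0:ℝ) < s := lt_trans hc hs
  have hlogc : Real.log c = -(x/τ) := Real.log_exp _
  have hlog : -(x/τ) < Real.log s := by
    rw [← hlogc]; exact Real.log_lt_log hc hs
  set L : ℝ := Real.log s with hL_def
  set u : ℝ := x * κ / τ + κ * L with hu_def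
  have hu0 : 0 ≤ u := by
    have : u = κ * (x/τ + L) := by rw [hu_def]; field_simp
    rw [this]
    have : 0 ≤ x/τ + L := by linarith
    positivity
  have hev : {ω | ∑ j : Fin κ, (τ/κ) * ((∑ i ∈ Finset.range s, G i j ω) - L) ≤ x}
      = {ω | ∑ i ∈ Finset.range s, X i ω ≤ u} := by
    ext ω
    simp only [Set.mem_setOf_eq]
    have hsum : ∑ j : Fin κ, (τ/κ) * ((∑ i ∈ Finset.range s, G i j ω) - L)
        = (τ/κ) * ((∑ i ∈ Finset.range s, X i ω) - κ * L) := by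
      rw [← Finset.mul_sum, Finset.sum_sub_distrib, Finset.sum_const, Finset.card_univ,
        Fintype.card_fin, nsmul_eq_mul]
      congr 2
      rw [hX_def, Finset.sum_comm]
    rw [hsum]
    have hpos : 0 < τ/(κ:ℝ) := by positivity
    rw [mul_comm, ← le_div_iff₀ hpos, div_div_eq_mul_div, sub_le_iff_le_add, hu_def]
  rw [hev, hcdf s u, if_pos hu0]
  congr 1
  have hlamu : lam * u = x/τ + L := by
    rw [hlam_def, hu_def]; field_simp
  have hexp : Real.exp (-(lam * u)) = c / s := by
    rw [hlamu, neg_add, Real.exp_add]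
    have h1 : Real.exp (-L) = (s:ℝ)⁻¹ := by rw [hL_def, Real.exp_neg, Real.exp_log hs0]
    rw [h1, hc_def]
    rw [show -(x/τ) = -(x * τ⁻¹) by rw [div_eq_mul_inv]]
    rw [div_eq_mul_inv]
  rw [hexp]
  congr 1
  rw [neg_div, sub_eq_add_neg]
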